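/- Suppose the link g is the identity, the covariates are independent, each X̃_j contains 1 as its first entry, and no entry of X̃_j equals any X_{r+k} for k ≠ j. If E(Y | X) = ∑_{k} X̃_kᵀ f_k(X_{r+k}), then E(Y | X̃_j, X_{r+j}) = X̃_jᵀ (f_j(X_{r+j}) + c_j) for some constant vector c_j, and consequently f_j + c_j minimizes η_j ↦ E[Y − X̃_jᵀ η_j(X_{r+j})]² over all measurable vector-valued functions η_j with E|X̃_jᵀη_j(X_{r+j})|² < ∞. -/

import Mathlib

open MeasureTheory ProbabilityTheory
open scoped ENNReal


/-- The conditional expectation of an L² function is L². -/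
lemma memℒp_two_condexp' {α : Type*} {m m0 : MeasurableSpace α} (hm : m ≤ m0)
    (μ : Measure α) [IsProbabilityMeasure μ] {f : α → ℝ} (hf : MemLp f 2 μ) :
    MemLp (μ[f|m]) 2 μ := by
  have hfi : Integrable f μ := hf.integrable one_le_two
  set F : Lp ℝ 2 μ := hf.toLp f with hF
  have hFf : F =ᵐ[μ] f := hf.coeFn_toLp
  set G : Lp ℝ 2 μ := ((condExpL2 ℝ ℝ hm F : lpMeas ℝ ℝ m 2 μ) : Lp ℝ 2 μ) with hGdef
  have hG : MemLp (G : α → ℝ) 2 μ := Lp.memLp G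
  have h_eq : (G : α → ℝ) =ᵐ[μ] μ[f|m] := by
    refine ae_eq_condExp_of_forall_setIntegral_eq hm hfi
      (fun s _ _ => (hG.integrable one_le_two).integrableOn) (fun s hs hμs => ?_) ?_
    · have h1 : ∫ x in s, (G : α → ℝ) x ∂μ = ∫ x in s, F x ∂μ :=
        integral_condExpL2_eq hm F hs hμs.ne
      rw [h1]
      exact setIntegral_congr_ae (hm s hs) (hFf.mono fun x hx _ => hx)
    · exact (condExpL2 ℝ ℝ hm F).2
  exact hG.ae_eq h_eq


/-- Freezing lemma: conditional expectation given `P` of `Θ (P ω, B ω)` with `B ⊥ P`. -/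
lemma condexp_indep_integral' {Ω E1 E2 : Type*} [MeasurableSpace Ω] [MeasurableSpace E1]
    [MeasurableSpace E2] (μ : Measure Ω) [IsProbabilityMeasure μ] {P : Ω → E1} {B : Ω → E2}
    (hP : Measurable P) (hB : Measurable B) (hind : IndepFun P B μ)
    {Θ : E1 × E2 → ℝ} (hΘ : Measurable Θ)
    (hint : Integrable (fun ω => Θ (P ω, B ω)) μ) :
    (∀ᵐ ω ∂μ, Integrable (fun b => Θ (P ω, b)) (μ.map B)) ∧
    (fun ω => ∫ b, Θ (P ω, b) ∂(μ.map B)) =ᵐ[μ]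
      μ[(fun ω => Θ (P ω, B ω)) | MeasurableSpace.comap P inferInstance] := by
  haveI : IsProbabilityMeasure (μ.map P) := Measure.isProbabilityMeasure_map hP.aemeasurable
  haveI : IsProbabilityMeasure (μ.map B) := Measure.isProbabilityMeasure_map hB.aemeasurable
  have hpair : Measurable (fun ω => (P ω, B ω)) := hP.prodMk hB
  have key : μ.map (fun ω => (P ω, B ω)) = (μ.map P).prod (μ.map B) :=
    (indepFun_iff_map_prod_eq_prod_map_map hP.aemeasurable hB.aemeasurable).mp hind
  have hintProd : Integrable Θ ((μ.map P).prod (μ.map B)) := by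
    rw [← key]
    exact (integrable_map_measure hΘ.aestronglyMeasurable hpair.aemeasurable).mpr hint
  have haeInt : ∀ᵐ ω ∂μ, Integrable (fun b => Θ (P ω, b)) (μ.map B) := by
    have h1 : ∀ᵐ a ∂(μ.map P), Integrable (fun b => Θ (a, b)) (μ.map B) :=
      hintProd.prod_right_ae
    exact ae_of_ae_map hP.aemeasurable h1
  refine ⟨haeInt, ?_⟩
  have hsm : StronglyMeasurable (fun a => ∫ b, Θ (a, b) ∂(μ.map B)) :=
    hΘ.stronglyMeasurable.integral_prod_right'
  have hintg : Integrable (fun a => ∫ b, Θ (a, b) ∂(μ.map B)) (μ.map P) :=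
    hintProd.integral_prod_left
  refine ae_eq_condExp_of_forall_setIntegral_eq hP.comap_le hint
    (fun s _ _ => ?_) (fun s hs _ => ?_) ?_
  · refine Integrable.integrableOn ?_
    exact (integrable_map_measure hsm.aestronglyMeasurable hP.aemeasurable).mp hintg
  · obtain ⟨t, ht, rfl⟩ := hs
    have h2 : ∫ ω in P ⁻¹' t, (∫ b, Θ (P ω, b) ∂(μ.map B)) ∂μ
        = ∫ a in t, (∫ b, Θ (a, b) ∂(μ.map B)) ∂(μ.map P) :=
      (setIntegral_map ht hsm.aestronglyMeasurable hP.aemeasurable).symm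
    have h3 : ∫ ω in P ⁻¹' t, Θ (P ω, B ω) ∂μ
        = ∫ q in t ×ˢ Set.univ, Θ q ∂((μ.map P).prod (μ.map B)) := by
      have hset : (fun ω => (P ω, B ω)) ⁻¹' (t ×ˢ Set.univ) = P ⁻¹' t := by
        ext ω
        simp [Set.mem_prod]
      rw [← key, setIntegral_map (ht.prod MeasurableSet.univ) hΘ.aestronglyMeasurable
        hpair.aemeasurable, hset]
    rw [h2, h3, setIntegral_prod _ (hintProd.integrableOn), Measure.restrict_univ]
  · refine StronglyMeasurable.aestronglyMeasurable ?_
    exact hsm.comp_measurable (measurable_iff_comap_le.mpr le_rfl)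


/-- A function that is affine along lines through points of a set `S` closed under affine
combinations agrees on `S` with a globally affine function. -/
lemma affine_extract' {d : ℕ} (S : Set (Fin d → ℝ)) (hS : S.Nonempty)
    (h : (Fin d → ℝ) → ℝ)
    (hcl : ∀ a ∈ S, ∀ b ∈ S, ∀ t : ℝ, a + t • (b - a) ∈ S)
    (hline : ∀ a ∈ S, ∀ b ∈ S, ∀ t : ℝ, h (a + t • (b - a)) = (1 - t) * h a + t * h b) :
    ∃ (c : Fin d → ℝ) (γ : ℝ), ∀ a ∈ S, h a = (∑ i, a i * c i) + γ := by
  obtain ⟨p, hp⟩ := hS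
  -- direction space
  have hsmul_mem : ∀ w : Fin d → ℝ, p + w ∈ S → ∀ t : ℝ, p + t • w ∈ S := by
    intro w hw t
    have := hcl p hp (p + w) hw t
    simpa using this
  have hmid : ∀ w₁ w₂ : Fin d → ℝ, p + w₁ ∈ S → p + w₂ ∈ S →
      (p + w₁) + (2⁻¹ : ℝ) • ((p + w₂) - (p + w₁)) ∈ S := fun w₁ w₂ h1 h2 =>
    hcl _ h1 _ h2 _
  have haddpt : ∀ w₁ w₂ : Fin d → ℝ,
      ((p + w₁) + (2⁻¹ : ℝ) • ((p + w₂) - (p + w₁))) + (-1 : ℝ) •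
        (p - ((p + w₁) + (2⁻¹ : ℝ) • ((p + w₂) - (p + w₁)))) = p + (w₁ + w₂) := by
    intro w₁ w₂
    funext i
    simp only [Pi.add_apply, Pi.smul_apply, Pi.sub_apply, smul_eq_mul]
    ring
  have hadd_mem : ∀ w₁ w₂ : Fin d → ℝ, p + w₁ ∈ S → p + w₂ ∈ S → p + (w₁ + w₂) ∈ S := by
    intro w₁ w₂ h1 h2
    have hm := hmid w₁ w₂ h1 h2
    have := hcl _ hm p hp (-1)
    rwa [haddpt w₁ w₂] at this
  have hadd_val : ∀ w₁ w₂ : Fin d → ℝ, p + w₁ ∈ S → p + w₂ ∈ S →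
      h (p + (w₁ + w₂)) = h (p + w₁) + h (p + w₂) - h p := by
    intro w₁ w₂ h1 h2
    have hm := hmid w₁ w₂ h1 h2
    have e1 := hline _ h1 _ h2 (2⁻¹ : ℝ)
    have e2 := hline _ hm p hp (-1 : ℝ)
    rw [haddpt w₁ w₂] at e2
    rw [e2, e1]; ring
  have hsmul_val : ∀ w : Fin d → ℝ, p + w ∈ S → ∀ t : ℝ,
      h (p + t • w) = h p + t * (h (p + w) - h p) := by
    intro w hw t
    have := hline p hp (p + w) hw t
    simp only [add_sub_cancel_left] at this
    rw [this]; ring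
  -- the submodule of directions
  let W : Submodule ℝ (Fin d → ℝ) :=
    { carrier := {w | p + w ∈ S}
      add_mem' := fun h1 h2 => hadd_mem _ _ h1 h2
      zero_mem' := by simpa using hp
      smul_mem' := fun t w hw => hsmul_mem w hw t }
  -- linear functional on W
  let ℓ : W →ₗ[ℝ] ℝ :=
    { toFun := fun w => h (p + (w : Fin d → ℝ)) - h p
      map_add' := by
        intro w₁ w₂
        have := hadd_val w₁ w₂ w₁.2 w₂.2
        simp only [Submodule.coe_add]
        rw [this]; ring
      map_smul' := by
        intro t w
        have := hsmul_val w w.2 t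
        simp only [SetLike.val_smul, RingHom.id_apply, smul_eq_mul]
        rw [this]; ring }
  obtain ⟨q, hq⟩ := Submodule.exists_isCompl W
  let L : (Fin d → ℝ) →ₗ[ℝ] ℝ := ℓ.comp (W.linearProjOfIsCompl q hq)
  refine ⟨fun i => L (fun j => if i = j then 1 else 0), h p - L p, fun a ha => ?_⟩
  have hwmem : a - p ∈ W := by
    show p + (a - p) ∈ S
    simpa using ha
  have hLw : L (a - p) = h (p + (a - p)) - h p := by
    have : W.linearProjOfIsCompl q hq (a - p) = ⟨a - p, hwmem⟩ :=
      Submodule.linearProjOfIsCompl_apply_left hq ⟨a - p, hwmem⟩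
    simp only [L, LinearMap.comp_apply, this]
    rfl
  have hsum : L a = ∑ i, a i * (L fun j => if i = j then 1 else 0) := by
    have := LinearMap.pi_apply_eq_sum_univ L a
    simpa [smul_eq_mul] using this
  have : h a = h p + L (a - p) := by
    rw [hLw]
    simp
  rw [this, map_sub, hsum]
  ring


lemma l2_mul_integrable' {Ω : Type*} {m0 : MeasurableSpace Ω} {μ : Measure Ω}
    [IsProbabilityMeasure μ] {u v : Ω → ℝ} (hu : MemLp u 2 μ) (hv : MemLp v 2 μ) :
    Integrable (fun ω => u ω * v ω) μ := by
  have h1 : (1 : ℝ≥0∞) / 1 = 1 / 2 + 1 / 2 := by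
    rw [ENNReal.div_add_div_same]
    norm_num
    rw [ENNReal.div_self] <;> norm_num
  have h2 : MemLp (u • v) 1 μ := hv.smul hu
  have h3 : Integrable (u • v) μ := memLp_one_iff_integrable.mp h2
  exact h3

lemma condexp_l2_min' {Ω : Type*} {m m0 : MeasurableSpace Ω} (hm : m ≤ m0)
    (μ : Measure Ω) [IsProbabilityMeasure μ] {Y g gs : Ω → ℝ}
    (hY : MemLp Y 2 μ) (hgs_eq : μ[Y|m] =ᵐ[μ] gs)
    (hg_sm : StronglyMeasurable[m] g) (hg : MemLp g 2 μ) :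
    ∫ ω, (Y ω - gs ω) ^ 2 ∂μ ≤ ∫ ω, (Y ω - g ω) ^ 2 ∂μ := by
  set C : Ω → ℝ := μ[Y|m] with hC
  have hCsm : StronglyMeasurable[m] C := stronglyMeasurable_condExp
  have hC2 : MemLp C 2 μ := memℒp_two_condexp' hm μ hY
  have hYi : Integrable Y μ := hY.integrable one_le_two
  have hYC2 : MemLp (fun ω => Y ω - C ω) 2 μ := hY.sub hC2
  have hD2 : MemLp (fun ω => C ω - g ω) 2 μ := hC2.sub hg
  have hDsm : StronglyMeasurable[m] (fun ω => C ω - g ω) := hCsm.sub hg_sm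
  set D : Ω → ℝ := fun ω => C ω - g ω with hD
  -- cross term vanishes
  have hDY : Integrable (fun ω => D ω * Y ω) μ := l2_mul_integrable' hD2 hY
  have hDC : Integrable (fun ω => D ω * C ω) μ := l2_mul_integrable' hD2 hC2
  have hpull : μ[(fun ω => D ω * Y ω)|m] =ᵐ[μ] fun ω => D ω * C ω := by
    have := condExp_mul_of_stronglyMeasurable_left hDsm (f := D) (g := Y) hDY hYi
    exact this
  have hcross : ∫ ω, (Y ω - C ω) * D ω ∂μ = 0 := by
    have h1 : ∫ ω, D ω * Y ω ∂μ = ∫ ω, D ω * C ω ∂μ := by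
      rw [← integral_condExp hm (f := fun ω => D ω * Y ω)]
      exact integral_congr_ae hpull
    have h2 : ∫ ω, (Y ω - C ω) * D ω ∂μ = ∫ ω, D ω * Y ω ∂μ - ∫ ω, D ω * C ω ∂μ := by
      rw [← integral_sub hDY hDC]
      congr 1
      funext ω
      ring
    rw [h2, h1, sub_self]
  -- expansion
  have hsq1 : Integrable (fun ω => (Y ω - C ω) ^ 2) μ := by
    have := l2_mul_integrable' hYC2 hYC2
    simpa [pow_two] using this
  have hsq2 : Integrable (fun ω => D ω ^ 2) μ := by
    have := l2_mul_integrable' hD2 hD2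
    simpa [pow_two] using this
  have hcr : Integrable (fun ω => (Y ω - C ω) * D ω) μ := l2_mul_integrable' hYC2 hD2
  have hexp : ∫ ω, (Y ω - g ω) ^ 2 ∂μ
      = ∫ ω, (Y ω - C ω) ^ 2 ∂μ + (∫ ω, 2 * ((Y ω - C ω) * D ω) ∂μ + ∫ ω, D ω ^ 2 ∂μ) := by
    have e1 : (fun ω => (Y ω - g ω) ^ 2)
        = fun ω => (Y ω - C ω) ^ 2 + (2 * ((Y ω - C ω) * D ω) + D ω ^ 2) := by
      funext ω
      simp only [hD]
      ring
    calc ∫ ω, (Y ω - g ω) ^ 2 ∂μ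
        = ∫ ω, (Y ω - C ω) ^ 2 + (2 * ((Y ω - C ω) * D ω) + D ω ^ 2) ∂μ := by rw [e1]
      _ = ∫ ω, (Y ω - C ω) ^ 2 ∂μ + ∫ ω, 2 * ((Y ω - C ω) * D ω) + D ω ^ 2 ∂μ :=
          integral_add hsq1 ((hcr.const_mul 2).add hsq2)
      _ = ∫ ω, (Y ω - C ω) ^ 2 ∂μ + (∫ ω, 2 * ((Y ω - C ω) * D ω) ∂μ + ∫ ω, D ω ^ 2 ∂μ) := by
          rw [integral_add (hcr.const_mul 2) hsq2]
  have hgseq : ∫ ω, (Y ω - gs ω) ^ 2 ∂μ = ∫ ω, (Y ω - C ω) ^ 2 ∂μ := by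
    refine integral_congr_ae ?_
    filter_upwards [hgs_eq] with ω hω
    rw [← hω]
  rw [hgseq, hexp]
  have h2c : ∫ ω, 2 * ((Y ω - C ω) * D ω) ∂μ = 0 := by
    rw [integral_const_mul, hcross, mul_zero]
  rw [h2c, zero_add]
  have : 0 ≤ ∫ ω, D ω ^ 2 ∂μ := integral_nonneg fun ω => sq_nonneg _
  linarith


theorem stmt19_aux {Ω : Type*} [m0 : MeasurableSpace Ω] (μ : Measure Ω) [IsProbabilityMeasure μ]
    {ι : Type*} (Z : ι → Ω → ℝ) (hZmeas : ∀ i, Measurable (Z i))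
    (hindep : iIndepFun Z μ)
    {p : ℕ} (dv : Fin p → ℕ) (hdv : ∀ k, 0 < dv k)
    (sel : (k : Fin p) → Fin (dv k) → ι) (crd : Fin p → ι)
    (hcrdinj : Function.Injective crd)
    (hnotself : ∀ k i, sel k i ≠ crd k)
    (hnotother : ∀ j i k, k ≠ j → sel j i ≠ crd k)
    (hone : ∀ k ω, Z (sel k ⟨0, hdv k⟩) ω = 1)
    (Y : Ω → ℝ) (hY : MemLp Y 2 μ)
    (f : (k : Fin p) → ℝ → Fin (dv k) → ℝ)
    (hfmeas : ∀ k, Measurable (f k))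
    (hfL2 : ∀ k, MemLp (fun ω => ∑ i, Z (sel k i) ω * f k (Z (crd k) ω) i) 2 μ)
    (hmodel :
      μ[Y | MeasurableSpace.comap (fun ω (i : ι) => Z i ω) MeasurableSpace.pi] =ᵐ[μ]
        fun ω => ∑ k, ∑ i, Z (sel k i) ω * f k (Z (crd k) ω) i) :
    ∀ j : Fin p, ∃ cj : Fin (dv j) → ℝ,
      (μ[Y | MeasurableSpace.comap
          (fun ω => ((fun i : Fin (dv j) => Z (sel j i) ω), Z (crd j) ω))
          inferInstance] =ᵐ[μ]
        fun ω => ∑ i, Z (sel j i) ω * (f j (Z (crd j) ω) i + cj i)) ∧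
      ∀ η : ℝ → Fin (dv j) → ℝ, Measurable η →
        MemLp (fun ω => ∑ i, Z (sel j i) ω * η (Z (crd j) ω) i) 2 μ →
        ∫ ω, (Y ω - ∑ i, Z (sel j i) ω * (f j (Z (crd j) ω) i + cj i)) ^ 2 ∂μ ≤
          ∫ ω, (Y ω - ∑ i, Z (sel j i) ω * η (Z (crd j) ω) i) ^ 2 ∂μ := by
  classical
  intro j
  set A : Ω → Fin (dv j) → ℝ := fun ω i => Z (sel j i) ω with hA
  set W : Ω → (Fin (dv j) → ℝ) × ℝ := fun ω => (A ω, Z (crd j) ω) with hWdef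
  have hWmeas : Measurable W :=
    (measurable_pi_lambda _ fun i => hZmeas _).prodMk (hZmeas _)
  have h𝒢0 : (MeasurableSpace.comap W inferInstance) ≤ m0 := hWmeas.comap_le
  have hmZ0 : (MeasurableSpace.comap (fun ω (i : ι) => Z i ω) MeasurableSpace.pi) ≤ m0 :=
    (measurable_pi_lambda _ fun i => hZmeas i).comap_le
  have hbigZ : Measurable[(MeasurableSpace.comap (fun ω (i : ι) => Z i ω) MeasurableSpace.pi)] (fun ω (i : ι) => Z i ω) := measurable_iff_comap_le.mpr le_rfl
  have hZmZ : ∀ i, Measurable[(MeasurableSpace.comap (fun ω (i : ι) => Z i ω) MeasurableSpace.pi)] (Z i) := fun i => (measurable_pi_apply i).comp hbigZ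
  have hWmZ : Measurable[(MeasurableSpace.comap (fun ω (i : ι) => Z i ω) MeasurableSpace.pi)] W := by
    refine Measurable.prodMk ?_ (hZmZ _)
    exact @measurable_pi_lambda Ω (Fin (dv j)) (fun _ => ℝ)
      (MeasurableSpace.comap (fun ω (i : ι) => Z i ω) MeasurableSpace.pi) _ _
      (fun i => hZmZ (sel j i))
  have h𝒢mZ : (MeasurableSpace.comap W inferInstance) ≤ (MeasurableSpace.comap (fun ω (i : ι) => Z i ω) MeasurableSpace.pi) :=
    Measurable.comap_le hWmZ
  set S : Fin p → Ω → ℝ := fun k ω => ∑ i, Z (sel k i) ω * f k (Z (crd k) ω) i with hS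
  have hSint : ∀ k, Integrable (S k) μ := fun k => (hfL2 k).integrable one_le_two
  set R : Ω → ℝ := fun ω => ∑ k ∈ Finset.univ.erase j, S k ω with hR
  have hRint : Integrable R μ := integrable_finset_sum _ fun k _ => hSint k
  -- strongly measurable w.r.t. (MeasurableSpace.comap W inferInstance) of functions of W
  have hGsm : ∀ φ : (Fin (dv j) → ℝ) × ℝ → ℝ, Measurable φ →
      StronglyMeasurable[(MeasurableSpace.comap W inferInstance)] (fun ω => φ (W ω)) := by
    intro φ hφ
    have hWG : Measurable[(MeasurableSpace.comap W inferInstance)] W := measurable_iff_comap_le.mpr le_rfl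
    have : Measurable[(MeasurableSpace.comap W inferInstance)] (fun ω => φ (W ω)) := hφ.comp hWG
    exact this.stronglyMeasurable
  have hφSj : Measurable (fun q : (Fin (dv j) → ℝ) × ℝ => ∑ i, q.1 i * f j q.2 i) := by
    apply Finset.measurable_sum
    intro i _
    exact ((measurable_pi_apply i).comp measurable_fst).mul
      ((measurable_pi_apply i).comp ((hfmeas j).comp measurable_snd))
  have smSj : StronglyMeasurable[(MeasurableSpace.comap W inferInstance)] (S j) := hGsm _ hφSj
  -- decomposition of the conditional expectation
  have e1 : μ[Y|(MeasurableSpace.comap W inferInstance)] =ᵐ[μ] μ[μ[Y|(MeasurableSpace.comap (fun ω (i : ι) => Z i ω) MeasurableSpace.pi)]|(MeasurableSpace.comap W inferInstance)] := (condExp_condExp_of_le (f := Y) h𝒢mZ hmZ0).symm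
  have e2 : μ[μ[Y|(MeasurableSpace.comap (fun ω (i : ι) => Z i ω) MeasurableSpace.pi)]|(MeasurableSpace.comap W inferInstance)] =ᵐ[μ] μ[fun ω => ∑ k, S k ω|(MeasurableSpace.comap W inferInstance)] := condExp_congr_ae hmodel
  have hsplit : (fun ω => ∑ k, S k ω) = fun ω => S j ω + R ω := by
    funext ω
    rw [hR]
    exact (Finset.add_sum_erase _ _ (Finset.mem_univ j)).symm
  have e3 : μ[fun ω => ∑ k, S k ω|(MeasurableSpace.comap W inferInstance)] =ᵐ[μ] fun ω => (μ[S j|(MeasurableSpace.comap W inferInstance)]) ω + (μ[R|(MeasurableSpace.comap W inferInstance)]) ω := by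
    rw [hsplit]
    exact condExp_add (hSint j) hRint _
  have e4 : μ[S j|(MeasurableSpace.comap W inferInstance)] = S j := condExp_of_stronglyMeasurable h𝒢0 smSj (hSint j)
  -- index sets
  set SJ : Finset ι := insert (crd j) (Finset.image (sel j) Finset.univ) with hSJ
  set TT : Finset ι := (Finset.univ.biUnion fun k : Fin p =>
    insert (crd k) (Finset.image (sel k) Finset.univ)) \ SJ with hTT
  have hdisj : Disjoint SJ TT := Finset.disjoint_sdiff
  set B : Ω → ({x // x ∈ TT} → ℝ) := fun ω i => Z i ω with hB
  have hBmeas : Measurable B := measurable_pi_lambda _ fun i => hZmeas i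
  have hbase := hindep.indepFun_finset SJ TT hdisj hZmeas
  have hselSJ : ∀ i : Fin (dv j), sel j i ∈ SJ := fun i =>
    Finset.mem_insert_of_mem (Finset.mem_image_of_mem _ (Finset.mem_univ i))
  have hcrdSJ : crd j ∈ SJ := Finset.mem_insert_self _ _
  set φP : ({x // x ∈ SJ} → ℝ) → (Fin (dv j) → ℝ) × ℝ :=
    fun g => (fun i => g ⟨sel j i, hselSJ i⟩, g ⟨crd j, hcrdSJ⟩) with hφP
  have hφPmeas : Measurable φP :=
    (measurable_pi_lambda _ fun i => measurable_pi_apply _).prodMk (measurable_pi_apply _)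
  have hindWB : IndepFun W B μ := hbase.comp hφPmeas measurable_id
  -- memberships
  have hcrdTT : ∀ k : Fin p, k ≠ j → crd k ∈ TT := by
    intro k hk
    refine Finset.mem_sdiff.mpr ⟨Finset.mem_biUnion.mpr
      ⟨k, Finset.mem_univ _, Finset.mem_insert_self _ _⟩, ?_⟩
    intro hmem
    rcases Finset.mem_insert.mp hmem with h | h
    · exact hk (hcrdinj h)
    · rcases Finset.mem_image.mp h with ⟨a, _, ha⟩
      exact hnotother j a k hk ha
  have hselTT : ∀ (k : Fin p), k ≠ j → ∀ i, (¬ ∃ i', sel j i' = sel k i) → sel k i ∈ TT := by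
    intro k hk i hno
    refine Finset.mem_sdiff.mpr ⟨Finset.mem_biUnion.mpr ⟨k, Finset.mem_univ _,
      Finset.mem_insert_of_mem (Finset.mem_image_of_mem _ (Finset.mem_univ i))⟩, ?_⟩
    intro hmem
    rcases Finset.mem_insert.mp hmem with h | h
    · exact hnotother k i j (Ne.symm hk) h
    · rcases Finset.mem_image.mp h with ⟨a, _, ha⟩
      exact hno ⟨a, ha⟩
  -- the frozen function
  set Θ : ((Fin (dv j) → ℝ) × ℝ) × ({x // x ∈ TT} → ℝ) → ℝ := fun q =>
    ∑ k ∈ Finset.univ.erase j, ∑ i,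
      (if h : ∃ i', sel j i' = sel k i then q.1.1 h.choose
       else if h2 : sel k i ∈ TT then q.2 ⟨sel k i, h2⟩ else 0) *
      f k (if h : crd k ∈ TT then q.2 ⟨crd k, h⟩ else 0) i with hΘdef
  have hΘmeas : Measurable Θ := by
    apply Finset.measurable_sum
    intro k _
    apply Finset.measurable_sum
    intro i _
    apply Measurable.mul
    · by_cases h : ∃ i', sel j i' = sel k i
      · simp only [dif_pos h]
        exact (measurable_pi_apply _).comp (measurable_fst.comp measurable_fst)
      · simp only [dif_neg h]
        by_cases h2 : sel k i ∈ TT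
        · simp only [dif_pos h2]
          exact (measurable_pi_apply _).comp measurable_snd
        · simp only [dif_neg h2]
          exact measurable_const
    · by_cases h : crd k ∈ TT
      · simp only [dif_pos h]
        exact (measurable_pi_apply i).comp
          ((hfmeas k).comp ((measurable_pi_apply _).comp measurable_snd))
      · simp only [dif_neg h]
        exact (measurable_pi_apply i).comp ((hfmeas k).comp measurable_const)
  have hΘR : ∀ ω, Θ (W ω, B ω) = R ω := by
    intro ω
    refine Finset.sum_congr rfl fun k hk => ?_
    have hkj : k ≠ j := Finset.ne_of_mem_erase hk
    refine Finset.sum_congr rfl fun i _ => ?_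
    rw [dif_pos (hcrdTT k hkj)]
    by_cases h : ∃ i', sel j i' = sel k i
    · rw [dif_pos h]
      have hch := h.choose_spec
      show Z (sel j h.choose) ω * f k (Z (crd k) ω) i = Z (sel k i) ω * f k (Z (crd k) ω) i
      rw [hch]
    · rw [dif_neg h, dif_pos (hselTT k hkj i h)]
  have hintΘ : Integrable (fun ω => Θ (W ω, B ω)) μ := by
    have : (fun ω => Θ (W ω, B ω)) = R := funext hΘR
    rw [this]
    exact hRint
  obtain ⟨haeInt, haeEq⟩ := condexp_indep_integral' μ hWmeas hBmeas hindWB hΘmeas hintΘ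
  have haeEqR : (fun ω => ∫ b, Θ (W ω, b) ∂(μ.map B)) =ᵐ[μ] μ[R|(MeasurableSpace.comap W inferInstance)] := by
    have : (fun ω => Θ (W ω, B ω)) = R := funext hΘR
    rw [this] at haeEq
    exact haeEq
  -- the affine structure
  set hfun : (Fin (dv j) → ℝ) → ℝ := fun a => ∫ b, Θ ((a, 0), b) ∂(μ.map B) with hhfun
  set G : Set (Fin (dv j) → ℝ) :=
    {a | Integrable (fun b => Θ ((a, 0), b)) (μ.map B)} with hG
  have hWA : ∀ ω b, Θ (W ω, b) = Θ ((A ω, 0), b) := fun ω b => rfl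
  have hGae : ∀ᵐ ω ∂μ, A ω ∈ G := by
    filter_upwards [haeInt] with ω hω
    exact hω
  have hGne : G.Nonempty := by
    haveI : (MeasureTheory.ae μ).NeBot := ae_neBot.mpr (IsProbabilityMeasure.ne_zero μ)
    obtain ⟨ω, hω⟩ := hGae.exists
    exact ⟨A ω, hω⟩
  have hkey : ∀ (a b : Fin (dv j) → ℝ) (t : ℝ) (β : {x // x ∈ TT} → ℝ),
      Θ ((a + t • (b - a), 0), β) = (1 - t) * Θ ((a, 0), β) + t * Θ ((b, 0), β) := by
    intro a b t β
    simp only [hΘdef]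
    rw [Finset.mul_sum, Finset.mul_sum, ← Finset.sum_add_distrib]
    refine Finset.sum_congr rfl fun k _ => ?_
    rw [Finset.mul_sum, Finset.mul_sum, ← Finset.sum_add_distrib]
    refine Finset.sum_congr rfl fun i _ => ?_
    by_cases h : ∃ i', sel j i' = sel k i
    · simp only [dif_pos h, Pi.add_apply, Pi.smul_apply, Pi.sub_apply, smul_eq_mul]
      ring
    · simp only [dif_neg h]
      ring
  have hcl : ∀ a ∈ G, ∀ b ∈ G, ∀ t : ℝ, a + t • (b - a) ∈ G := by
    intro a ha b hb t
    have : Integrable (fun β => (1 - t) * Θ ((a, 0), β) + t * Θ ((b, 0), β)) (μ.map B) :=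
      (ha.const_mul _).add (hb.const_mul _)
    exact this.congr (Filter.Eventually.of_forall fun β => (hkey a b t β).symm)
  have hline : ∀ a ∈ G, ∀ b ∈ G, ∀ t : ℝ,
      hfun (a + t • (b - a)) = (1 - t) * hfun a + t * hfun b := by
    intro a ha b hb t
    calc hfun (a + t • (b - a))
        = ∫ β, ((1 - t) * Θ ((a, 0), β) + t * Θ ((b, 0), β)) ∂(μ.map B) :=
          integral_congr_ae (Filter.Eventually.of_forall fun β => hkey a b t β)
      _ = (1 - t) * hfun a + t * hfun b := by
          rw [integral_add ((ha.const_mul _)) (hb.const_mul _), integral_const_mul,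
            integral_const_mul]
  obtain ⟨c, γ, hcγ⟩ := affine_extract' G hGne hfun hcl hline
  set cj : Fin (dv j) → ℝ :=
    fun i => c i + if i = (⟨0, hdv j⟩ : Fin (dv j)) then γ else 0 with hcj
  set Wstar : Ω → ℝ :=
    fun ω => ∑ i, Z (sel j i) ω * (f j (Z (crd j) ω) i + cj i) with hWstar
  have hsumW : ∀ ω, Wstar ω = S j ω + ((∑ i, A ω i * c i) + γ) := by
    intro ω
    have h3 : ∑ i, A ω i * (if i = (⟨0, hdv j⟩ : Fin (dv j)) then γ else 0)
        = γ := by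
      have : ∀ i : Fin (dv j),
          A ω i * (if i = (⟨0, hdv j⟩ : Fin (dv j)) then γ else 0)
          = if i = (⟨0, hdv j⟩ : Fin (dv j)) then A ω i * γ else 0 := by
        intro i
        split <;> simp
      rw [Finset.sum_congr rfl fun i _ => this i, Finset.sum_ite_eq' Finset.univ _
        (fun i => A ω i * γ), if_pos (Finset.mem_univ _)]
      have h1 : A ω (⟨0, hdv j⟩ : Fin (dv j)) = 1 := hone j ω
      rw [h1, one_mul]
    calc Wstar ω = ∑ i, (A ω i * f j (Z (crd j) ω) i + (A ω i * c i +
          A ω i * (if i = (⟨0, hdv j⟩ : Fin (dv j)) then γ else 0))) := by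
          refine Finset.sum_congr rfl fun i _ => ?_
          simp only [hcj]
          ring
      _ = S j ω + ((∑ i, A ω i * c i) + γ) := by
          rw [Finset.sum_add_distrib, Finset.sum_add_distrib, h3]
  have hfinal : μ[Y|(MeasurableSpace.comap W inferInstance)] =ᵐ[μ] Wstar := by
    have echain : μ[Y|(MeasurableSpace.comap W inferInstance)] =ᵐ[μ] fun ω => S j ω + (μ[R|(MeasurableSpace.comap W inferInstance)]) ω := by
      refine (e1.trans (e2.trans e3)).trans ?_
      rw [e4]
    filter_upwards [echain, haeEqR.symm, hGae] with ω h1 h2 h3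
    rw [h1, hsumW ω, ← hcγ (A ω) h3]
    congr 1
  refine ⟨cj, hfinal, ?_⟩
  intro η hηmeas hηL2
  have hφη : Measurable (fun q : (Fin (dv j) → ℝ) × ℝ => ∑ i, q.1 i * η q.2 i) := by
    apply Finset.measurable_sum
    intro i _
    exact ((measurable_pi_apply i).comp measurable_fst).mul
      ((measurable_pi_apply i).comp (hηmeas.comp measurable_snd))
  have smη : StronglyMeasurable[(MeasurableSpace.comap W inferInstance)] (fun ω => ∑ i, Z (sel j i) ω * η (Z (crd j) ω) i) :=
    hGsm _ hφη
  exact condexp_l2_min' h𝒢0 μ hY hfinal smη hηL2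


/-- Remark 1: with identity link, independent covariates `Z i`, each `X̃_j` having `1` as
its first entry and no entry of `X̃_j` equal to any `X_{r+k}` for `k ≠ j` (nor to
`X_{r+j}` itself), if `E(Y | X) = ∑_k X̃_kᵀ f_k(X_{r+k})`, then
`E(Y | X̃_j, X_{r+j}) = X̃_jᵀ (f_j(X_{r+j}) + c_j)` for some constant vector `c_j`, and
consequently `f_j + c_j` minimizes `η ↦ E[Y − X̃_jᵀ η(X_{r+j})]²` over all measurable
square-integrable `η`. -/
theorem stmt19 {Ω : Type*} [MeasurableSpace Ω] (μ : Measure Ω) [IsProbabilityMeasure μ]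
    {ι : Type*} (Z : ι → Ω → ℝ) (hZmeas : ∀ i, Measurable (Z i))
    (hindep : iIndepFun Z μ)
    {p : ℕ} (dv : Fin p → ℕ) (hdv : ∀ k, 0 < dv k)
    (sel : (k : Fin p) → Fin (dv k) → ι) (crd : Fin p → ι)
    (hcrdinj : Function.Injective crd)
    (hnotself : ∀ k i, sel k i ≠ crd k)
    (hnotother : ∀ j i k, k ≠ j → sel j i ≠ crd k)
    (hone : ∀ k ω, Z (sel k ⟨0, hdv k⟩) ω = 1)
    (Y : Ω → ℝ) (hY : MemLp Y 2 μ)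
    (f : (k : Fin p) → ℝ → Fin (dv k) → ℝ)
    (hfmeas : ∀ k, Measurable (f k))
    (hfL2 : ∀ k, MemLp (fun ω => ∑ i, Z (sel k i) ω * f k (Z (crd k) ω) i) 2 μ)
    (hmodel :
      μ[Y | MeasurableSpace.comap (fun ω (i : ι) => Z i ω) MeasurableSpace.pi] =ᵐ[μ]
        fun ω => ∑ k, ∑ i, Z (sel k i) ω * f k (Z (crd k) ω) i) :
    ∀ j : Fin p, ∃ cj : Fin (dv j) → ℝ,
      (μ[Y | MeasurableSpace.comap
          (fun ω => ((fun i : Fin (dv j) => Z (sel j i) ω), Z (crd j) ω))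
          inferInstance] =ᵐ[μ]
        fun ω => ∑ i, Z (sel j i) ω * (f j (Z (crd j) ω) i + cj i)) ∧
      ∀ η : ℝ → Fin (dv j) → ℝ, Measurable η →
        MemLp (fun ω => ∑ i, Z (sel j i) ω * η (Z (crd j) ω) i) 2 μ →
        ∫ ω, (Y ω - ∑ i, Z (sel j i) ω * (f j (Z (crd j) ω) i + cj i)) ^ 2 ∂μ ≤
          ∫ ω, (Y ω - ∑ i, Z (sel j i) ω * η (Z (crd j) ω) i) ^ 2 ∂μ :=
  stmt19_aux μ Z hZmeas hindep dv hdv sel crd hcrdinj hnotself hnotother hone Y hY f hfmeas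
    hfL2 hmodel
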